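/- arXiv:2002.08112 — 2 statements merged into one kernel-verified Lean document; each statement's English description precedes it below -/
import Mathlib

section
/- Let 1 ≤ n ≤ N. For U Haar-distributed in the unitary group U(N), the expected value of |Det_n(U)|², where Det_n(U) is the determinant of the upper-left n×n block of U, equals n!(N−n)!/N!. -/
open MeasureTheory

namespace RandomImmanants

/-- The Borel/pi measurable structure on square complex matrices. -/
noncomputable instance (N : ℕ) : MeasurableSpace (Matrix (Fin N) (Fin N) ℂ) :=
  inferInstanceAs (MeasurableSpace (Fin N → Fin N → ℂ))

/-- The Borel/pi measurable structure on square real matrices. -/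
instance (N : ℕ) : MeasurableSpace (Matrix (Fin N) (Fin N) ℝ) :=
  inferInstanceAs (MeasurableSpace (Fin N → Fin N → ℝ))

/-- The `i`-th largest part (0-indexed) of a partition; `0` beyond its length. -/
def partNth {n : ℕ} (γ : Nat.Partition n) (i : ℕ) : ℕ :=
  ((γ.parts.sort (· ≤ ·)).reverse).getD i 0

/-- The number of colorings `g : {0,…,m-1} → {0,…,m-1}` that are constant on the cycles
of `π` and whose color class sizes are prescribed by `β` (this is the evaluation of the
complete homogeneous symmetric function `h_β` against the power sum `p_μ`, `μ` the cycle
type of `π`; a negative entry of `β` gives `0`). -/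
def etaChar {m : ℕ} (β : Fin m → ℤ) (π : Equiv.Perm (Fin m)) : ℤ :=
  ((Finset.univ.filter fun g : Fin m → Fin m =>
    g ∘ π = g ∧ ∀ i : Fin m,
      (((Finset.univ.filter fun k => g k = i).card : ℤ) = β i)).card : ℤ)

/-- The irreducible character `χ_γ` of the symmetric group `S_m` labelled by the partition
`γ ⊢ m`, via the Jacobi–Trudi determinantal formula `χ_γ = det (h_{γ_i - i + j})_{1 ≤ i,j ≤ m}`
applied to power sums. -/
def chiChar {m : ℕ} (γ : Nat.Partition m) (π : Equiv.Perm (Fin m)) : ℤ :=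
  ∑ σ : Equiv.Perm (Fin m),
    ((Equiv.Perm.sign σ : ℤˣ) : ℤ) *
      etaChar (fun i => (partNth γ i : ℤ) + ((σ i : ℕ) : ℤ) - ((i : ℕ) : ℤ)) π

/-- The partition `2λ = (2λ₁, 2λ₂, …)` of `2n` obtained by doubling each part of `λ ⊢ n`. -/
def doublePart {n : ℕ} (lam : Nat.Partition n) : Nat.Partition (2 * n) where
  parts := lam.parts.map (fun a => 2 * a)
  parts_pos := by
    intro i hi
    obtain ⟨a, ha, rfl⟩ := Multiset.mem_map.mp hi
    have := lam.parts_pos ha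
    omega
  parts_sum := by
    have h : (lam.parts.map fun a => 2 * a).sum = 2 * lam.parts.sum := by
      simpa using Multiset.sum_map_mul_left (a := (2 : ℕ)) (f := fun a => a) (s := lam.parts)
    rw [h, lam.parts_sum]

/-- The partition `(1ⁿ)` of `n`. -/
def onesPart (n : ℕ) : Nat.Partition n where
  parts := Multiset.replicate n 1
  parts_pos := by
    intro i hi
    rw [Multiset.eq_of_mem_replicate hi]
    exact one_pos
  parts_sum := by simp

/-- Letters `{1,…,2n}` (0-indexed: `{0,…,2n-1}`) as pairs: `(k, r) ↦ 2k + r`, so the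
1-indexed letter `2k-1` (odd) is `(k-1, 0)` and the letter `2k` (even) is `(k-1, 1)`. -/
def pairEquiv (n : ℕ) : Fin n × Fin 2 ≃ Fin (2 * n) where
  toFun x := ⟨2 * (x.1 : ℕ) + (x.2 : ℕ), by have h1 := x.1.isLt; have h2 := x.2.isLt; omega⟩
  invFun i := (⟨(i : ℕ) / 2, by have := i.isLt; omega⟩, ⟨(i : ℕ) % 2, by omega⟩)
  left_inv := by
    rintro ⟨⟨a, ha⟩, ⟨b, hb⟩⟩
    simp only [Prod.mk.injEq]
    constructor <;> exact Fin.ext (by simp; omega)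
  right_inv := by
    rintro ⟨v, hv⟩
    exact Fin.ext (by simp; omega)

/-- The fixed-point free involution `p = (1 2)(3 4)⋯(2n-1 2n)` of `{1,…,2n}`. -/
def pairSwap (n : ℕ) : Equiv.Perm (Fin (2 * n)) :=
  (pairEquiv n).permCongr (Equiv.prodCongr (Equiv.refl (Fin n)) (Equiv.swap 0 1))

/-- For `π ∈ S_n`, the permutation `π_o ∈ S_{2n}` acting on the odd letters:
`π_o(2k-1) = 2π(k)-1` and `π_o(2k) = 2k` (1-indexed). -/
def toOdd {n : ℕ} (π : Equiv.Perm (Fin n)) : Equiv.Perm (Fin (2 * n)) :=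
  (pairEquiv n).permCongr
    (Equiv.prodCongrLeft fun r : Fin 2 => if r = 0 then π else Equiv.refl (Fin n))

/-- For `π ∈ S_n`, the permutation `π_e ∈ S_{2n}` acting on the even letters:
`π_e(2k) = 2π(k)` and `π_e(2k-1) = 2k-1` (1-indexed). -/
def toEven {n : ℕ} (π : Equiv.Perm (Fin n)) : Equiv.Perm (Fin (2 * n)) :=
  (pairEquiv n).permCongr
    (Equiv.prodCongrLeft fun r : Fin 2 => if r = 1 then π else Equiv.refl (Fin n))

/-- The hyperoctahedral group `H_n ⊂ S_{2n}`: the centralizer of the trivial matching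
`{{1,2},{3,4},…,{2n-1,2n}}`, i.e. of the involution `pairSwap n`. -/
def hyperOct (n : ℕ) : Finset (Equiv.Perm (Fin (2 * n))) :=
  Finset.univ.filter fun h => h * pairSwap n = pairSwap n * h

/-- The zonal spherical function `ω_λ` of the Gelfand pair `(S_{2n}, H_n)`:
`ω_λ(τ) = (1/|H_n|) ∑_{ξ ∈ H_n} χ_{2λ}(τξ)`. -/
noncomputable def omegaSph {n : ℕ} (lam : Nat.Partition n) (τ : Equiv.Perm (Fin (2 * n))) : ℝ :=
  (1 / ((hyperOct n).card : ℝ)) * ∑ ξ ∈ hyperOct n, (chiChar (doublePart lam) (τ * ξ) : ℝ)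

/-- `g_λ = ∑_{μ ⊢ n} |C_μ| ω_λ(μ)`, written as a sum over `S_n` (the permutations of cycle
type `μ`, embedded on the odd letters, contribute `|C_μ| ω_λ(μ)`). -/
noncomputable def gFun {n : ℕ} (lam : Nat.Partition n) : ℝ :=
  ∑ σ : Equiv.Perm (Fin n), omegaSph lam (toOdd σ)

/-- `G_{λ,γ} = ∑_{μ ⊢ n} |C_μ| ω_λ(μ) χ_γ(μ)`, written as a sum over `S_n`. -/
noncomputable def GFun {n : ℕ} (lam γ : Nat.Partition n) : ℝ :=
  ∑ σ : Equiv.Perm (Fin n), omegaSph lam (toOdd σ) * (chiChar γ σ : ℝ)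

/-- `[N]_γ^{(α)} = ∏_{(i,j) ∈ γ} (N + α(j-1) - i + 1)`, the product running over the boxes
of the Young diagram of `γ` (row `i`, column `j`, 1-indexed). -/
def polyGen (α : ℤ) (N : ℤ) {m : ℕ} (γ : Nat.Partition m) : ℤ :=
  ∏ i ∈ Finset.range m, ∏ j ∈ Finset.range (partNth γ i), (N + α * (j : ℤ) - (i : ℤ))

/-- The upper-left `n × n` block of an `N × N` matrix (junk value `0` if `n > N`). -/
def subBlock (n N : ℕ) {R : Type*} [Zero R] (U : Matrix (Fin N) (Fin N) R) :
    Matrix (Fin n) (Fin n) R := fun i j =>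
  if h : (i : ℕ) < N ∧ (j : ℕ) < N then U ⟨i, h.1⟩ ⟨j, h.2⟩ else 0

/-- The permanent of a square matrix. -/
def perMat {m : ℕ} {R : Type*} [CommRing R] (A : Matrix (Fin m) (Fin m) R) : R :=
  ∑ π : Equiv.Perm (Fin m), ∏ k : Fin m, A k (π k)

/-- The immanant `Imm_γ(A) = ∑_{π ∈ S_m} χ_γ(π) ∏_k A_{k, π(k)}`. -/
def immMat {m : ℕ} {R : Type*} [CommRing R] (γ : Nat.Partition m)
    (A : Matrix (Fin m) (Fin m) R) : R :=
  ∑ π : Equiv.Perm (Fin m), (chiChar γ π : R) * ∏ k : Fin m, A k (π k)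

/-- The full cycle type of a permutation of `m` letters, a partition of `m`
(fixed points contribute parts equal to `1`). -/
def fullCycleType {m : ℕ} [Fintype (Fin m)] (σ : Equiv.Perm (Fin m)) : Multiset ℕ :=
  σ.cycleType + Multiset.replicate (m - σ.cycleType.sum) 1

/-- Halve all multiplicities in a multiset. -/
def halfMultiset (ν : Multiset ℕ) : Multiset ℕ :=
  ∑ k ∈ ν.toFinset, Multiset.replicate (ν.count k / 2) k

/-- The coset type of `σ ∈ S_{2n}`: the connected components of the graph on `{1,…,2n}`
whose edges are the blocks of the trivial matching `t` and of `σ(t)` are exactly the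
cycle-pairs of the permutation `p ∘ (σ p σ⁻¹)` (`p = pairSwap n`), each component with `2k`
vertices producing two `k`-cycles; so the coset type is obtained by halving the multiplicities
in the full cycle type of `p * (σ * p * σ⁻¹)`. -/
def cosetTypeM (n : ℕ) (σ : Equiv.Perm (Fin (2 * n))) : Multiset ℕ :=
  halfMultiset (fullCycleType (pairSwap n * (σ * pairSwap n * σ⁻¹)))


section AvgDetProof

open Finset

private lemma det_row_expand {m : ℕ} (M : Matrix (Fin m) (Fin m) ℂ) :
    M.det = ∑ σ : Equiv.Perm (Fin m), ((Equiv.Perm.sign σ : ℤ) : ℂ) * ∏ i, M i (σ i) := by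
  rw [← Matrix.det_transpose, Matrix.det_apply']
  simp [Matrix.transpose_apply]

private lemma sum_abs_det_block {n N : ℕ} (hnN : n ≤ N) (U : Matrix (Fin N) (Fin N) ℂ)
    (hU : star U * U = 1) :
    ∑ f : Fin n → Fin N,
      ‖(Matrix.of fun i j => U (f i) (Fin.castLE hnN j)).det‖ ^ 2
      = n.factorial := by
  classical
  set c : Fin n → Fin N := Fin.castLE hnN with hc
  have hcinj : Function.Injective c := Fin.castLE_injective hnN
  have key : ∀ a b : Fin n,
      (∑ k, U k (c a) * (starRingEnd ℂ) (U k (c b))) = if a = b then 1 else 0 := by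
    intro a b
    have h1 : (star U * U) (c b) (c a) = (1 : Matrix (Fin N) (Fin N) ℂ) (c b) (c a) := by
      rw [hU]
    simp only [Matrix.mul_apply, Matrix.star_apply, Matrix.one_apply,
      Matrix.star_eq_conjTranspose, Matrix.conjTranspose_apply] at h1
    have h2 : (∑ k, U k (c a) * (starRingEnd ℂ) (U k (c b))) = if c b = c a then 1 else 0 := by
      rw [← h1]
      exact Finset.sum_congr rfl fun k _ => by rw [mul_comm]; rfl
    rw [h2]
    by_cases h : a = b
    · simp [h]
    · rw [if_neg (fun hh => h (hcinj hh).symm), if_neg h]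
  have hs : ∀ σ : Equiv.Perm (Fin n),
      ((Equiv.Perm.sign σ : ℤ) : ℂ) * ((Equiv.Perm.sign σ : ℤ) : ℂ) = 1 := by
    intro σ; rcases Int.units_eq_one_or (Equiv.Perm.sign σ) with h | h <;> simp [h]
  have main : (∑ f : Fin n → Fin N,
      ((Matrix.of fun i j => U (f i) (c j)).det *
        (starRingEnd ℂ) ((Matrix.of fun i j => U (f i) (c j)).det)))
      = (n.factorial : ℂ) := by
    have expand : ∀ f : Fin n → Fin N, (Matrix.of fun i j => U (f i) (c j)).det
        = ∑ σ : Equiv.Perm (Fin n), ((Equiv.Perm.sign σ : ℤ) : ℂ) * ∏ i, U (f i) (c (σ i)) :=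
      fun f => det_row_expand _
    calc ∑ f : Fin n → Fin N, ((Matrix.of fun i j => U (f i) (c j)).det *
            (starRingEnd ℂ) ((Matrix.of fun i j => U (f i) (c j)).det))
        = ∑ f : Fin n → Fin N, ∑ σ : Equiv.Perm (Fin n), ∑ τ : Equiv.Perm (Fin n),
            (((Equiv.Perm.sign σ : ℤ) : ℂ) * ((Equiv.Perm.sign τ : ℤ) : ℂ)) *
            ∏ i, (U (f i) (c (σ i)) * (starRingEnd ℂ) (U (f i) (c (τ i)))) := by
          refine Finset.sum_congr rfl fun f _ => ?_
          rw [expand f, map_sum, Finset.sum_mul_sum]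
          refine Finset.sum_congr rfl fun σ _ => Finset.sum_congr rfl fun τ _ => ?_
          rw [map_mul, map_prod, map_intCast, Finset.prod_mul_distrib]
          ring
      _ = ∑ σ : Equiv.Perm (Fin n), ∑ τ : Equiv.Perm (Fin n),
            (((Equiv.Perm.sign σ : ℤ) : ℂ) * ((Equiv.Perm.sign τ : ℤ) : ℂ)) *
            ∑ f : Fin n → Fin N, ∏ i,
              (U (f i) (c (σ i)) * (starRingEnd ℂ) (U (f i) (c (τ i)))) := by
          rw [Finset.sum_comm]
          refine Finset.sum_congr rfl fun σ _ => ?_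
          rw [Finset.sum_comm]
          refine Finset.sum_congr rfl fun τ _ => ?_
          rw [Finset.mul_sum]
      _ = ∑ σ : Equiv.Perm (Fin n), ∑ τ : Equiv.Perm (Fin n),
            (((Equiv.Perm.sign σ : ℤ) : ℂ) * ((Equiv.Perm.sign τ : ℤ) : ℂ)) *
            (if σ = τ then 1 else 0) := by
          refine Finset.sum_congr rfl fun σ _ => Finset.sum_congr rfl fun τ _ => ?_
          congr 1
          rw [show (Finset.univ : Finset (Fin n → Fin N))
              = Fintype.piFinset (fun _ : Fin n => (Finset.univ : Finset (Fin N))) from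
            (Fintype.piFinset_univ).symm]
          rw [Finset.sum_prod_piFinset Finset.univ
            (fun i k => U k (c (σ i)) * (starRingEnd ℂ) (U k (c (τ i))))]
          rw [Finset.prod_congr rfl fun i _ => key (σ i) (τ i), Fintype.prod_boole]
          simp [Equiv.ext_iff, funext_iff]
      _ = (n.factorial : ℂ) := by
          have hone : ∀ σ : Equiv.Perm (Fin n),
              (∑ τ : Equiv.Perm (Fin n),
                (((Equiv.Perm.sign σ : ℤ) : ℂ) * ((Equiv.Perm.sign τ : ℤ) : ℂ)) *
                (if σ = τ then 1 else 0)) = 1 := by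
            intro σ
            rw [Finset.sum_eq_single σ]
            · simp [hs σ]
            · intro τ _ hτ; simp [Ne.symm hτ]
            · intro h; exact absurd (Finset.mem_univ σ) h
          rw [Finset.sum_congr rfl fun σ _ => hone σ]
          simp [Fintype.card_perm]
  have habs : ∀ z : ℂ, (‖z‖ ^ 2 : ℝ) = (z * (starRingEnd ℂ) z).re := by
    intro z; rw [Complex.mul_conj]; simp [Complex.sq_norm]
  calc ∑ f : Fin n → Fin N,
        ‖(Matrix.of fun i j => U (f i) (c j)).det‖ ^ 2
      = ∑ f : Fin n → Fin N, (((Matrix.of fun i j => U (f i) (c j)).det *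
          (starRingEnd ℂ) ((Matrix.of fun i j => U (f i) (c j)).det)).re) := by
        exact Finset.sum_congr rfl fun f _ => habs _
    _ = (n.factorial : ℝ) := by
        rw [← Complex.re_sum, main]; simp

private lemma exists_perm_comp {n N : ℕ} (hnN : n ≤ N) {f : Fin n → Fin N}
    (hf : Function.Injective f) :
    ∃ g : Equiv.Perm (Fin N), ∀ i, g (Fin.castLE hnN i) = f i := by
  classical
  have he : Function.Injective (Fin.castLE hnN) := Fin.castLE_injective hnN
  let e : {x // x ∈ Set.range (Fin.castLE hnN)} ≃ {x // x ∈ Set.range f} :=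
    (Equiv.ofInjective _ he).symm.trans (Equiv.ofInjective f hf)
  refine ⟨e.extendSubtype, fun i => ?_⟩
  rw [Equiv.extendSubtype_apply_of_mem e _ ⟨i, rfl⟩]
  show ((Equiv.ofInjective f hf) ((Equiv.ofInjective _ he).symm ⟨_, ⟨i, rfl⟩⟩) : Fin N) = f i
  rw [Equiv.ofInjective_symm_apply he i]
  rfl

/-- The permutation matrix of `g` as an element of the unitary group. -/
noncomputable def permU (N : ℕ) (g : Equiv.Perm (Fin N)) : Matrix.unitaryGroup (Fin N) ℂ :=
  ⟨(1 : Matrix (Fin N) (Fin N) ℂ).submatrix g id, by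
    rw [Matrix.mem_unitaryGroup_iff']
    ext a b
    simp only [Matrix.mul_apply, Matrix.conjTranspose_apply, Matrix.star_eq_conjTranspose,
      Matrix.submatrix_apply, id_eq, Matrix.one_apply]
    rw [← Equiv.sum_comp g.symm
      (fun x : Fin N => star (if g x = a then (1:ℂ) else 0) * if g x = b then 1 else 0)]
    simp [apply_ite, Finset.sum_ite_eq, eq_comm]⟩

private lemma permU_mul_apply {N : ℕ} (g : Equiv.Perm (Fin N))
    (U : Matrix.unitaryGroup (Fin N) ℂ) (a b : Fin N) :
    (((permU N g * U : Matrix.unitaryGroup (Fin N) ℂ) :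
      Matrix (Fin N) (Fin N) ℂ)) a b = (U : Matrix (Fin N) (Fin N) ℂ) (g a) b := by
  have h : ((permU N g * U : Matrix.unitaryGroup (Fin N) ℂ) : Matrix (Fin N) (Fin N) ℂ)
      = ((permU N g : Matrix (Fin N) (Fin N) ℂ) * (U : Matrix (Fin N) (Fin N) ℂ)) := rfl
  rw [h]
  simp [permU, Matrix.mul_apply, Matrix.one_apply, ite_mul, Finset.sum_ite_eq]

private lemma measurable_entry {N : ℕ} (i j : Fin N) :
    Measurable (fun V : Matrix.unitaryGroup (Fin N) ℂ =>
      (V : Matrix (Fin N) (Fin N) ℂ) i j) :=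
  (measurable_pi_apply j).comp ((measurable_pi_apply i).comp measurable_subtype_coe)

private lemma measurable_matrix_mul_left {N : ℕ} (C : Matrix (Fin N) (Fin N) ℂ) :
    Measurable (fun V : Matrix.unitaryGroup (Fin N) ℂ =>
      C * (V : Matrix (Fin N) (Fin N) ℂ)) := by
  apply measurable_pi_lambda
  intro i
  apply measurable_pi_lambda
  intro j
  have h : (fun V : Matrix.unitaryGroup (Fin N) ℂ =>
      (C * (V : Matrix (Fin N) (Fin N) ℂ)) i j)
      = fun V : Matrix.unitaryGroup (Fin N) ℂ =>
        ∑ k, C i k * (V : Matrix (Fin N) (Fin N) ℂ) k j := by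
    funext V; rw [Matrix.mul_apply]
  rw [h]
  exact Finset.measurable_sum _ (fun k _ => (measurable_entry k j).const_mul _)

private lemma measurable_matrix_mul_right {N : ℕ} (C : Matrix (Fin N) (Fin N) ℂ) :
    Measurable (fun V : Matrix.unitaryGroup (Fin N) ℂ =>
      (V : Matrix (Fin N) (Fin N) ℂ) * C) := by
  apply measurable_pi_lambda
  intro i
  apply measurable_pi_lambda
  intro j
  have h : (fun V : Matrix.unitaryGroup (Fin N) ℂ =>
      ((V : Matrix (Fin N) (Fin N) ℂ) * C) i j)
      = fun V : Matrix.unitaryGroup (Fin N) ℂ =>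
        ∑ k, (V : Matrix (Fin N) (Fin N) ℂ) i k * C k j := by
    funext V; rw [Matrix.mul_apply]
  rw [h]
  exact Finset.measurable_sum _ (fun k _ => (measurable_entry i k).mul_const _)

instance (N : ℕ) : MeasurableMul (Matrix.unitaryGroup (Fin N) ℂ) := by
  constructor
  · intro c
    exact (measurable_matrix_mul_left (c : Matrix (Fin N) (Fin N) ℂ)).subtype_mk
  · intro c
    exact (measurable_matrix_mul_right (c : Matrix (Fin N) (Fin N) ℂ)).subtype_mk

private lemma integrable_absdet {n N : ℕ} (hnN : n ≤ N)
    (μ : Measure (Matrix.unitaryGroup (Fin N) ℂ)) [IsFiniteMeasure μ] (f : Fin n → Fin N) :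
    Integrable (fun V : Matrix.unitaryGroup (Fin N) ℂ =>
      ‖(Matrix.of fun i j =>
        (V : Matrix (Fin N) (Fin N) ℂ) (f i) (Fin.castLE hnN j)).det‖ ^ 2) μ := by
  classical
  have hmeas : Measurable (fun V : Matrix.unitaryGroup (Fin N) ℂ =>
      ‖(Matrix.of fun i j =>
        (V : Matrix (Fin N) (Fin N) ℂ) (f i) (Fin.castLE hnN j)).det‖ ^ 2) := by
    have hdet : Measurable (fun V : Matrix.unitaryGroup (Fin N) ℂ =>
        (Matrix.of fun i j =>
          (V : Matrix (Fin N) (Fin N) ℂ) (f i) (Fin.castLE hnN j)).det) := by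
      have h : (fun V : Matrix.unitaryGroup (Fin N) ℂ =>
          (Matrix.of fun i j =>
            (V : Matrix (Fin N) (Fin N) ℂ) (f i) (Fin.castLE hnN j)).det)
          = fun V : Matrix.unitaryGroup (Fin N) ℂ =>
            ∑ σ : Equiv.Perm (Fin n), ((Equiv.Perm.sign σ : ℤ) : ℂ) *
              ∏ i, (V : Matrix (Fin N) (Fin N) ℂ) (f i) (Fin.castLE hnN (σ i)) := by
        funext V; rw [det_row_expand]; rfl
      rw [h]
      refine Finset.measurable_sum _ (fun σ _ => Measurable.const_mul ?_ _)
      exact Finset.measurable_prod _ (fun i _ => measurable_entry _ _)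
    exact (continuous_norm.measurable.comp hdet).pow_const 2
  refine Integrable.mono' (integrable_const ((n.factorial : ℝ) ^ 2))
    hmeas.aestronglyMeasurable ?_
  filter_upwards with V
  have hb : ∀ (a b : Fin N), ‖(V : Matrix (Fin N) (Fin N) ℂ) a b‖ ≤ 1 := by
    intro a b
    have := entry_norm_bound_of_unitary V.2 a b
    exact this
  have hdetle : ‖(Matrix.of fun i j =>
      (V : Matrix (Fin N) (Fin N) ℂ) (f i) (Fin.castLE hnN j)).det‖ ≤ (n.factorial : ℝ) := by
    rw [det_row_expand]
    refine le_trans (norm_sum_le _ _) ?_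
    have hterm : ∀ σ : Equiv.Perm (Fin n),
        ‖((Equiv.Perm.sign σ : ℤ) : ℂ) *
          ∏ i, (Matrix.of fun i j => (V : Matrix (Fin N) (Fin N) ℂ) (f i)
            (Fin.castLE hnN j)) i (σ i)‖ ≤ 1 := by
      intro σ
      rw [norm_mul, norm_prod]
      have h1 : ‖((Equiv.Perm.sign σ : ℤ) : ℂ)‖ = 1 := by
        rcases Int.units_eq_one_or (Equiv.Perm.sign σ) with h | h <;> simp [h]
      rw [h1, one_mul]
      exact Finset.prod_le_one (fun i _ => (norm_nonneg _))
        (fun i _ => hb _ _)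
    refine le_trans (Finset.sum_le_sum fun σ _ => hterm σ) ?_
    simp [Fintype.card_perm]
  have hnn : (0:ℝ) ≤ ‖(Matrix.of fun i j =>
      (V : Matrix (Fin N) (Fin N) ℂ) (f i) (Fin.castLE hnN j)).det‖ := norm_nonneg _
  rw [Real.norm_eq_abs, abs_of_nonneg (by positivity)]
  exact pow_le_pow_left₀ hnn hdetle 2

end AvgDetProof

/-- For `1 ≤ n ≤ N` and `U` Haar-distributed in the unitary group `U(N)`,
the average of `|Det_n(U)|²` (the determinant of the upper-left `n × n` block) equals
`n!(N-n)!/N!`. -/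
theorem determinant_sq_avg_unitary (n N : ℕ) (hn : 1 ≤ n) (hnN : n ≤ N)
    (μ : Measure (Matrix.unitaryGroup (Fin N) ℂ))
    [μ.IsHaarMeasure] [IsProbabilityMeasure μ] :
    ∫ U, ‖Matrix.det (subBlock n N (U : Matrix (Fin N) (Fin N) ℂ))‖ ^ 2 ∂μ
      = ((n.factorial : ℝ) * ((N - n).factorial : ℝ)) / (N.factorial : ℝ) := by
  classical
  set c : Fin n → Fin N := Fin.castLE hnN with hc
  set d : (Fin n → Fin N) → Matrix.unitaryGroup (Fin N) ℂ → ℝ := fun f V =>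
    ‖(Matrix.of fun i j =>
      (V : Matrix (Fin N) (Fin N) ℂ) (f i) (Fin.castLE hnN j)).det‖ ^ 2 with hd
  -- the integrand equals `d c`
  have hsub : (fun U : Matrix.unitaryGroup (Fin N) ℂ =>
      ‖Matrix.det (subBlock n N (U : Matrix (Fin N) (Fin N) ℂ))‖ ^ 2) = d c := by
    funext V
    have : subBlock n N (V : Matrix (Fin N) (Fin N) ℂ)
        = Matrix.of fun i j => (V : Matrix (Fin N) (Fin N) ℂ) (c i) (Fin.castLE hnN j) := by
      funext i j
      have h1 : (i : ℕ) < N := lt_of_lt_of_le i.isLt hnN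
      have h2 : (j : ℕ) < N := lt_of_lt_of_le j.isLt hnN
      simp only [subBlock, dif_pos (And.intro h1 h2)]
      rfl
    rw [hd, this]
  rw [hsub]
  -- total mass identity
  have hpt : ∀ V : Matrix.unitaryGroup (Fin N) ℂ,
      ∑ f : Fin n → Fin N, d f V = (n.factorial : ℝ) := by
    intro V
    exact sum_abs_det_block hnN (V : Matrix (Fin N) (Fin N) ℂ)
      (Matrix.mem_unitaryGroup_iff'.mp V.2)
  have hint : ∀ f : Fin n → Fin N, Integrable (d f) μ := fun f => integrable_absdet hnN μ f
  -- each injective f contributes the same integral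
  have hsame : ∀ f : Fin n → Fin N, Function.Injective f → ∫ V, d f V ∂μ = ∫ V, d c V ∂μ := by
    intro f hf
    obtain ⟨g, hg⟩ := exists_perm_comp hnN hf
    have heq : ∀ V : Matrix.unitaryGroup (Fin N) ℂ, d f V = d c (permU N g * V) := by
      intro V
      have : (Matrix.of fun i j =>
          ((permU N g * V : Matrix.unitaryGroup (Fin N) ℂ) :
            Matrix (Fin N) (Fin N) ℂ) (c i) (Fin.castLE hnN j))
          = Matrix.of fun i j => (V : Matrix (Fin N) (Fin N) ℂ) (f i) (Fin.castLE hnN j) := by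
        funext i j
        show ((permU N g * V : Matrix.unitaryGroup (Fin N) ℂ) :
          Matrix (Fin N) (Fin N) ℂ) (c i) (Fin.castLE hnN j) = _
        rw [permU_mul_apply, hc]
        simp only [hg i]
        rfl
      rw [hd]
      simp only [this]
    rw [show (fun V => d f V) = fun V => d c (permU N g * V) from funext heq]
    exact integral_mul_left_eq_self (fun V => d c V) (permU N g)
  -- non-injective f contribute 0
  have hzero : ∀ f : Fin n → Fin N, ¬ Function.Injective f → d f = 0 := by
    intro f hf
    rw [Function.not_injective_iff] at hf
    obtain ⟨a, b, hab, hne⟩ := hf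
    funext V
    have : (Matrix.of fun i j =>
        (V : Matrix (Fin N) (Fin N) ℂ) (f i) (Fin.castLE hnN j)).det = 0 := by
      refine Matrix.det_zero_of_row_eq hne ?_
      funext j
      simp [hab]
    rw [hd]
    simp only [this]
    simp
  -- put everything together
  have hcount : (Finset.univ.filter fun f : Fin n → Fin N => Function.Injective f).card
      = N.descFactorial n := by
    rw [← Fintype.card_subtype]
    rw [Fintype.card_congr (Equiv.subtypeInjectiveEquivEmbedding (Fin n) (Fin N))]
    rw [Fintype.card_embedding_eq]
    simp
  have htot : (N.descFactorial n : ℝ) * (∫ V, d c V ∂μ) = (n.factorial : ℝ) := by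
    have h1 : ∫ V, (∑ f : Fin n → Fin N, d f V) ∂μ = (n.factorial : ℝ) := by
      rw [show (fun V => ∑ f : Fin n → Fin N, d f V)
        = fun _ => (n.factorial : ℝ) from funext hpt]
      simp [measure_univ]
    rw [integral_finset_sum Finset.univ (fun f _ => hint f)] at h1
    have h2 : ∀ f : Fin n → Fin N, ∫ V, d f V ∂μ
        = if Function.Injective f then ∫ V, d c V ∂μ else 0 := by
      intro f
      by_cases hf : Function.Injective f
      · rw [if_pos hf]; exact hsame f hf
      · rw [if_neg hf, hzero f hf]; simp
    rw [Finset.sum_congr rfl fun f _ => h2 f, Finset.sum_ite, Finset.sum_const,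
      Finset.sum_const, smul_zero, add_zero, hcount] at h1
    rw [← h1]
    simp [nsmul_eq_mul]
  have hdnz : N.descFactorial n ≠ 0 := by
    intro h
    have h2 := Nat.factorial_mul_descFactorial hnN
    rw [h, mul_zero] at h2
    exact (Nat.factorial_pos N).ne' h2.symm
  have hdpos : (0:ℝ) < (N.descFactorial n : ℝ) := by
    exact_mod_cast Nat.pos_of_ne_zero hdnz
  have hfac : ((N - n).factorial : ℝ) * (N.descFactorial n : ℝ) = (N.factorial : ℝ) := by
    exact_mod_cast congrArg (Nat.cast (R := ℝ)) (Nat.factorial_mul_descFactorial hnN)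
  have hNfac : (0:ℝ) < (N.factorial : ℝ) := by exact_mod_cast N.factorial_pos
  field_simp
  rw [mul_comm] at htot
  rw [← hfac]
  calc (∫ V, d c V ∂μ) * ((N - n).factorial * (N.descFactorial n : ℝ))
      = ((∫ V, d c V ∂μ) * (N.descFactorial n : ℝ)) * ((N - n).factorial : ℝ) := by ring
    _ = (n.factorial : ℝ) * ((N - n).factorial : ℝ) := by rw [htot]


end RandomImmanants
end

section
/- Let 1 ≤ n ≤ N. For O Haar-distributed in the orthogonal group O(N), the expected value of (Det_n(O))², where Det_n(O) is the determinant of the upper-left n×n block of O, equals n!(N−n)!/N!. -/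
open MeasureTheory

namespace RandomImmanants

private lemma horth_entries {N : ℕ} (U : Matrix (Fin N) (Fin N) ℝ)
    (hU : star U * U = 1) (a b : Fin N) :
    ∑ k, U k a * U k b = if a = b then (1:ℝ) else 0 := by
  have h := congrFun (congrFun hU a) b
  simpa [Matrix.mul_apply, Matrix.star_apply, Matrix.one_apply] using h

private lemma key_sum {n N : ℕ} (hnN : n ≤ N) (U : Matrix (Fin N) (Fin N) ℝ)
    (hU : star U * U = 1) :
    ∑ f : Fin n → Fin N,
      (Matrix.det (Matrix.of fun i j : Fin n => U (f i) (Fin.castLE hnN j))) ^ 2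
      = (n.factorial : ℝ) := by
  classical
  have horth := horth_entries U hU
  have step1 : ∀ f : Fin n → Fin N,
      (Matrix.det (Matrix.of fun i j : Fin n => U (f i) (Fin.castLE hnN j))) ^ 2
      = ∑ σ : Equiv.Perm (Fin n), ∑ τ : Equiv.Perm (Fin n),
          (((Equiv.Perm.sign σ : ℤ) : ℝ) * ((Equiv.Perm.sign τ : ℤ) : ℝ)) *
          ∏ i : Fin n,
            (U (f i) (Fin.castLE hnN (σ⁻¹ i)) * U (f i) (Fin.castLE hnN (τ⁻¹ i))) := by
    intro f
    have hM : ∀ ρ : Equiv.Perm (Fin n),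
        (∏ i, (Matrix.of fun i j : Fin n => U (f i) (Fin.castLE hnN j)) (ρ i) i)
          = ∏ i, U (f i) (Fin.castLE hnN (ρ⁻¹ i)) := by
      intro ρ
      calc (∏ i, (Matrix.of fun i j : Fin n => U (f i) (Fin.castLE hnN j)) (ρ i) i)
          = ∏ i, U (f (ρ i)) (Fin.castLE hnN (ρ⁻¹ (ρ i))) := by simp
        _ = ∏ i, U (f i) (Fin.castLE hnN (ρ⁻¹ i)) :=
            Equiv.prod_comp ρ fun i => U (f i) (Fin.castLE hnN (ρ⁻¹ i))
    rw [Matrix.det_apply', sq, Finset.sum_mul_sum]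
    refine Finset.sum_congr rfl fun σ _ => Finset.sum_congr rfl fun τ _ => ?_
    rw [hM σ, hM τ, mul_mul_mul_comm, Finset.prod_mul_distrib]
  calc ∑ f : Fin n → Fin N,
        (Matrix.det (Matrix.of fun i j : Fin n => U (f i) (Fin.castLE hnN j))) ^ 2
      = ∑ f : Fin n → Fin N, ∑ σ : Equiv.Perm (Fin n), ∑ τ : Equiv.Perm (Fin n),
          (((Equiv.Perm.sign σ : ℤ) : ℝ) * ((Equiv.Perm.sign τ : ℤ) : ℝ)) *
          ∏ i : Fin n,
            (U (f i) (Fin.castLE hnN (σ⁻¹ i)) * U (f i) (Fin.castLE hnN (τ⁻¹ i))) :=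
        Finset.sum_congr rfl fun f _ => step1 f
    _ = ∑ σ : Equiv.Perm (Fin n), ∑ τ : Equiv.Perm (Fin n),
          (((Equiv.Perm.sign σ : ℤ) : ℝ) * ((Equiv.Perm.sign τ : ℤ) : ℝ)) *
          ∑ f : Fin n → Fin N, ∏ i : Fin n,
            (U (f i) (Fin.castLE hnN (σ⁻¹ i)) * U (f i) (Fin.castLE hnN (τ⁻¹ i))) := by
        rw [Finset.sum_comm]
        refine Finset.sum_congr rfl fun σ _ => ?_
        rw [Finset.sum_comm]
        refine Finset.sum_congr rfl fun τ _ => ?_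
        rw [Finset.mul_sum]
    _ = ∑ σ : Equiv.Perm (Fin n), ∑ τ : Equiv.Perm (Fin n),
          (((Equiv.Perm.sign σ : ℤ) : ℝ) * ((Equiv.Perm.sign τ : ℤ) : ℝ)) *
          if τ = σ then 1 else 0 := by
        refine Finset.sum_congr rfl fun σ _ => Finset.sum_congr rfl fun τ _ => ?_
        congr 1
        rw [← Fintype.prod_sum fun i k =>
          U k (Fin.castLE hnN (σ⁻¹ i)) * U k (Fin.castLE hnN (τ⁻¹ i))]
        by_cases h : τ = σ
        · subst h
          simp [horth]
        · rw [if_neg h]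
          have h' : ¬ (σ⁻¹ = τ⁻¹) := fun hc => h (by
            have := congrArg (·⁻¹) hc; simpa using this.symm)
          obtain ⟨j, hj⟩ := Function.ne_iff.mp fun hc => h' (Equiv.ext fun x => congrFun hc x)
          refine Finset.prod_eq_zero (Finset.mem_univ j) ?_
          rw [horth, if_neg (by simpa [Fin.castLE_inj] using hj)]
    _ = ∑ σ : Equiv.Perm (Fin n), (1:ℝ) := by
        refine Finset.sum_congr rfl fun σ _ => ?_
        simp only [mul_ite, mul_one, mul_zero, Finset.sum_ite_eq', Finset.mem_univ, if_true]
        rcases Int.units_eq_one_or (Equiv.Perm.sign σ) with h | h <;> rw [h] <;> norm_num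
    _ = (n.factorial : ℝ) := by
        simp [Fintype.card_perm]


private lemma measurable_entry_s10 {N : ℕ} (a b : Fin N) :
    Measurable fun O : Matrix.orthogonalGroup (Fin N) ℝ =>
      (O : Matrix (Fin N) (Fin N) ℝ) a b :=
  (measurable_pi_apply b).comp ((measurable_pi_apply a).comp measurable_subtype_coe)

instance (N : ℕ) : MeasurableMul (Matrix.orthogonalGroup (Fin N) ℝ) := by
  have key : ∀ (c : Matrix.orthogonalGroup (Fin N) ℝ),
      (Measurable fun x : Matrix.orthogonalGroup (Fin N) ℝ =>
        ((c : Matrix (Fin N) (Fin N) ℝ) * (x : Matrix (Fin N) (Fin N) ℝ)))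
      ∧ (Measurable fun x : Matrix.orthogonalGroup (Fin N) ℝ =>
        ((x : Matrix (Fin N) (Fin N) ℝ) * (c : Matrix (Fin N) (Fin N) ℝ))) := by
    intro c
    constructor <;>
    · apply measurable_pi_lambda
      intro i
      apply measurable_pi_lambda
      intro j
      simp only [Matrix.mul_apply]
      apply Finset.measurable_sum
      intro k _
      first
        | exact measurable_const.mul (measurable_entry_s10 k j)
        | exact (measurable_entry_s10 i k).mul measurable_const
  constructor
  · intro c
    exact Measurable.subtype_mk (key c).1
  · intro c
    exact Measurable.subtype_mk (key c).2

private lemma measurable_detf {n N : ℕ} (hnN : n ≤ N) (f : Fin n → Fin N) :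
    Measurable fun O : Matrix.orthogonalGroup (Fin N) ℝ =>
      (Matrix.det (Matrix.of fun i j : Fin n =>
        (O : Matrix (Fin N) (Fin N) ℝ) (f i) (Fin.castLE hnN j))) ^ 2 := by
  apply Measurable.pow_const
  simp_rw [Matrix.det_apply']
  apply Finset.measurable_sum
  intro σ _
  apply Measurable.const_mul
  apply Finset.measurable_prod
  intro i _
  exact measurable_entry_s10 _ _

private lemma entry_abs_le {N : ℕ} (O : Matrix.orthogonalGroup (Fin N) ℝ) (a b : Fin N) :
    |(O : Matrix (Fin N) (Fin N) ℝ) a b| ≤ 1 := by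
  have h := horth_entries (O : Matrix (Fin N) (Fin N) ℝ)
    (Matrix.UnitaryGroup.star_mul_self O) b b
  rw [if_pos rfl] at h
  rw [abs_le_one_iff_mul_self_le_one]
  calc (O : Matrix (Fin N) (Fin N) ℝ) a b * (O : Matrix (Fin N) (Fin N) ℝ) a b
      ≤ ∑ k, (O : Matrix (Fin N) (Fin N) ℝ) k b * (O : Matrix (Fin N) (Fin N) ℝ) k b :=
        Finset.single_le_sum (f := fun k => (O : Matrix (Fin N) (Fin N) ℝ) k b * (O : Matrix (Fin N) (Fin N) ℝ) k b) (fun k _ => mul_self_nonneg _) (Finset.mem_univ a)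
    _ = 1 := h

private lemma det_sq_norm_le {n N : ℕ} (hnN : n ≤ N) (f : Fin n → Fin N)
    (O : Matrix.orthogonalGroup (Fin N) ℝ) :
    ‖(Matrix.det (Matrix.of fun i j : Fin n =>
        (O : Matrix (Fin N) (Fin N) ℝ) (f i) (Fin.castLE hnN j))) ^ 2‖
      ≤ (n.factorial : ℝ) ^ 2 := by
  have hd : |Matrix.det (Matrix.of fun i j : Fin n =>
      (O : Matrix (Fin N) (Fin N) ℝ) (f i) (Fin.castLE hnN j))| ≤ (n.factorial : ℝ) := by
    rw [Matrix.det_apply']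
    calc |∑ σ : Equiv.Perm (Fin n), ((Equiv.Perm.sign σ : ℤ) : ℝ) *
            ∏ i, (Matrix.of fun i j : Fin n =>
              (O : Matrix (Fin N) (Fin N) ℝ) (f i) (Fin.castLE hnN j)) (σ i) i|
        ≤ ∑ σ : Equiv.Perm (Fin n), |((Equiv.Perm.sign σ : ℤ) : ℝ) *
            ∏ i, (Matrix.of fun i j : Fin n =>
              (O : Matrix (Fin N) (Fin N) ℝ) (f i) (Fin.castLE hnN j)) (σ i) i| :=
          Finset.abs_sum_le_sum_abs _ _
      _ ≤ ∑ _σ : Equiv.Perm (Fin n), (1:ℝ) := by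
          refine Finset.sum_le_sum fun σ _ => ?_
          have h1 : |((Equiv.Perm.sign σ : ℤ) : ℝ)| = 1 := by
            rcases Int.units_eq_one_or (Equiv.Perm.sign σ) with h | h <;> rw [h] <;> norm_num
          rw [abs_mul, h1, one_mul, Finset.abs_prod]
          exact Finset.prod_le_one (fun i _ => abs_nonneg _) fun i _ => entry_abs_le O _ _
      _ = (n.factorial : ℝ) := by simp [Fintype.card_perm]
  rw [Real.norm_eq_abs, abs_pow]
  exact pow_le_pow_left₀ (abs_nonneg _) hd 2

private lemma exists_perm_extend {n N : ℕ} (hnN : n ≤ N) (f : Fin n → Fin N)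
    (hf : Function.Injective f) :
    ∃ q : Equiv.Perm (Fin N), ∀ i : Fin n, q (Fin.castLE hnN i) = f i := by
  classical
  have hci : Function.Injective (Fin.castLE hnN) := Fin.castLE_injective hnN
  have hcard : Fintype.card ↥(Set.range (Fin.castLE hnN))ᶜ
      = Fintype.card ↥(Set.range f)ᶜ := by
    rw [Fintype.card_compl_set, Fintype.card_compl_set,
      Set.card_range_of_injective hci, Set.card_range_of_injective hf]
  refine ⟨((Equiv.Set.sumCompl (Set.range (Fin.castLE hnN))).symm.trans
      ((Equiv.sumCongr ((Equiv.ofInjective _ hci).symm.trans (Equiv.ofInjective f hf))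
        (Fintype.equivOfCardEq hcard)).trans
      (Equiv.Set.sumCompl (Set.range f)))), fun i => ?_⟩
  have hmem : Fin.castLE hnN i ∈ Set.range (Fin.castLE hnN) := ⟨i, rfl⟩
  simp only [Equiv.trans_apply, Equiv.Set.sumCompl_symm_apply_of_mem hmem,
    Equiv.sumCongr_apply, Sum.map_inl]
  rw [show ((Equiv.ofInjective _ hci).symm ⟨Fin.castLE hnN i, hmem⟩) = i from
    Equiv.ofInjective_symm_apply hci i]
  simp


/-- For `1 ≤ n ≤ N` and `O` Haar-distributed in the orthogonal group
`O(N)`, the average of `(Det_n(O))²` over the upper-left `n × n` block equals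
`n!(N-n)!/N!`. -/
theorem determinant_sq_avg_orthogonal (n N : ℕ) (hn : 1 ≤ n) (hnN : n ≤ N)
    (ν : Measure (Matrix.orthogonalGroup (Fin N) ℝ))
    [ν.IsHaarMeasure] [IsProbabilityMeasure ν] :
    ∫ O, (Matrix.det (subBlock n N (O : Matrix (Fin N) (Fin N) ℝ))) ^ 2 ∂ν
      = ((n.factorial : ℝ) * ((N - n).factorial : ℝ)) / (N.factorial : ℝ) := by
  classical
  have hsub : ∀ U : Matrix (Fin N) (Fin N) ℝ,
      subBlock n N U = Matrix.of fun i j : Fin n =>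
        U (Fin.castLE hnN i) (Fin.castLE hnN j) := by
    intro U
    ext i j
    show subBlock n N U i j = _
    rw [subBlock, dif_pos ⟨lt_of_lt_of_le i.isLt hnN, lt_of_lt_of_le j.isLt hnN⟩]
    rfl
  set Ff : (Fin n → Fin N) → Matrix.orthogonalGroup (Fin N) ℝ → ℝ := fun f O =>
    (Matrix.det (Matrix.of fun i j : Fin n =>
      (O : Matrix (Fin N) (Fin N) ℝ) (f i) (Fin.castLE hnN j))) ^ 2 with hFf
  set E : ℝ := ∫ O, (Matrix.det (subBlock n N (O : Matrix (Fin N) (Fin N) ℝ))) ^ 2 ∂ν with hE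
  have hint : ∀ f : Fin n → Fin N, Integrable (Ff f) ν :=
    fun f => ⟨(measurable_detf hnN f).aestronglyMeasurable,
      HasFiniteIntegral.of_bounded (C := (n.factorial : ℝ) ^ 2)
        (Filter.Eventually.of_forall fun O => det_sq_norm_le hnN f O)⟩
  have hsum : ∑ f : Fin n → Fin N, ∫ O, Ff f O ∂ν = (n.factorial : ℝ) := by
    rw [← integral_finset_sum _ fun f _ => hint f]
    have hptw : (fun O : Matrix.orthogonalGroup (Fin N) ℝ =>
        ∑ f : Fin n → Fin N, Ff f O) = fun _ => (n.factorial : ℝ) :=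
      funext fun O => key_sum hnN _ (Matrix.UnitaryGroup.star_mul_self O)
    rw [hptw, integral_const]
    simp
  have hEf : ∀ f : Fin n → Fin N,
      ∫ O, Ff f O ∂ν = if Function.Injective f then E else 0 := by
    intro f
    by_cases hf : Function.Injective f
    · rw [if_pos hf]
      obtain ⟨q, hq⟩ := exists_perm_extend hnN f hf
      have hP : (Matrix.of fun a k : Fin N => if q a = k then (1:ℝ) else 0)
          ∈ Matrix.orthogonalGroup (Fin N) ℝ := by
        rw [Matrix.mem_orthogonalGroup_iff]
        ext a b
        simp only [Matrix.mul_apply, Matrix.star_apply, Matrix.of_apply, Matrix.one_apply,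
          star_trivial, ite_mul, one_mul, zero_mul, Finset.sum_ite_eq, Finset.mem_univ, if_true]
        simp [EmbeddingLike.apply_eq_iff_eq, eq_comm]
      set g : Matrix.orthogonalGroup (Fin N) ℝ := ⟨_, hP⟩ with hg
      have hgO : ∀ O : Matrix.orthogonalGroup (Fin N) ℝ,
          Ff f O = (Matrix.det (subBlock n N
            ((g * O : Matrix.orthogonalGroup (Fin N) ℝ) : Matrix (Fin N) (Fin N) ℝ))) ^ 2 := by
        intro O
        rw [hsub]
        have hcoe : ((g * O : Matrix.orthogonalGroup (Fin N) ℝ) : Matrix (Fin N) (Fin N) ℝ)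
            = (Matrix.of fun a k : Fin N => if q a = k then (1:ℝ) else 0)
              * (O : Matrix (Fin N) (Fin N) ℝ) := rfl
        have hmat : (Matrix.of fun i j : Fin n =>
              ((g * O : Matrix.orthogonalGroup (Fin N) ℝ) : Matrix (Fin N) (Fin N) ℝ)
                (Fin.castLE hnN i) (Fin.castLE hnN j))
            = Matrix.of fun i j : Fin n =>
                (O : Matrix (Fin N) (Fin N) ℝ) (f i) (Fin.castLE hnN j) := by
          funext i j
          show ((g * O : Matrix.orthogonalGroup (Fin N) ℝ) : Matrix (Fin N) (Fin N) ℝ)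
              (Fin.castLE hnN i) (Fin.castLE hnN j)
            = (O : Matrix (Fin N) (Fin N) ℝ) (f i) (Fin.castLE hnN j)
          rw [hcoe]
          simp only [Matrix.of_apply, Matrix.mul_apply, ite_mul, one_mul, zero_mul,
            Finset.sum_ite_eq, Finset.mem_univ, if_true]
          rw [hq i]
        rw [hmat]
      calc ∫ O, Ff f O ∂ν
          = ∫ O, (Matrix.det (subBlock n N
              ((g * O : Matrix.orthogonalGroup (Fin N) ℝ) : Matrix (Fin N) (Fin N) ℝ))) ^ 2 ∂ν := by
            exact integral_congr_ae (Filter.Eventually.of_forall fun O => hgO O)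
        _ = E := integral_mul_left_eq_self
            (fun O : Matrix.orthogonalGroup (Fin N) ℝ =>
              (Matrix.det (subBlock n N (O : Matrix (Fin N) (Fin N) ℝ))) ^ 2) g
    · rw [if_neg hf]
      have hz : ∀ O : Matrix.orthogonalGroup (Fin N) ℝ, Ff f O = 0 := by
        intro O
        obtain ⟨a, b, hab, hne⟩ := Function.not_injective_iff.mp hf
        have : (Matrix.det (Matrix.of fun i j : Fin n =>
            (O : Matrix (Fin N) (Fin N) ℝ) (f i) (Fin.castLE hnN j))) = 0 := by
          apply Matrix.det_zero_of_row_eq hne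
          funext j
          simp [hab]
        rw [hFf]
        simp [this]
      simp [funext hz]
  rw [Finset.sum_congr rfl fun f _ => hEf f] at hsum
  rw [Finset.sum_ite, Finset.sum_const, Finset.sum_const_zero, add_zero] at hsum
  have hcard : (Finset.univ.filter fun f : Fin n → Fin N => Function.Injective f).card
      = N.descFactorial n := by
    rw [← Fintype.card_subtype,
      Fintype.card_congr (Equiv.subtypeInjectiveEquivEmbedding (Fin n) (Fin N))]
    simp [Fintype.card_embedding_eq]
  rw [hcard, nsmul_eq_mul] at hsum
  have hfac : ((N - n).factorial : ℝ) * (N.descFactorial n : ℝ) = (N.factorial : ℝ) := by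
    exact_mod_cast congrArg (Nat.cast : ℕ → ℝ) (Nat.factorial_mul_descFactorial hnN)
  have hdpos : (0:ℝ) < (N.descFactorial n : ℝ) := by
    have h0 : 0 < N.descFactorial n := by
      rcases Nat.eq_zero_or_pos (N.descFactorial n) with h | h
      · exfalso
        have := Nat.factorial_mul_descFactorial hnN
        rw [h, Nat.mul_zero] at this
        exact (Nat.factorial_pos N).ne' this.symm
      · exact h
    exact_mod_cast h0
  have hNpos : (0:ℝ) < (N.factorial : ℝ) := by exact_mod_cast Nat.factorial_pos N
  rw [eq_div_iff hNpos.ne', ← hfac]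
  linear_combination ((N - n).factorial : ℝ) * hsum


end RandomImmanants
end
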